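/- arXiv:0906.3724 — 3 statements merged into one kernel-verified Lean document; each statement's English description precedes it below -/
import Mathlib

section
/- Let G be an ordered graph on [n], let B ⊆ [n] be a homogeneous block of G with |B| ≤ 2, and let v ∈ B. Then G − v does not have the same type as G. -/
namespace OrderedGraphs

/-- The order-preserving map `Fin (n-1) → Fin n` that skips the vertex `v`. -/
def delMap {n : ℕ} (v : Fin n) (i : Fin (n - 1)) : Fin n :=
  if h : (i : ℕ) < (v : ℕ) then ⟨i, lt_trans h v.isLt⟩
  else ⟨(i : ℕ) + 1, by have h1 := i.isLt; have h2 := v.isLt; omega⟩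

/-- `erase G v` is the ordered graph `G − v` on `[n-1]`, obtained by deleting `v` and
relabelling the remaining vertices order-preservingly. -/
def erase {n : ℕ} (G : SimpleGraph (Fin n)) (v : Fin n) : SimpleGraph (Fin (n - 1)) where
  Adj i j := G.Adj (delMap v i) (delMap v j)
  symm := ⟨fun i j h => G.adj_symm h⟩
  loopless := ⟨fun i h => G.irrefl h⟩

/-- The shadow `∂G` of a single ordered graph. -/
def shadow {n : ℕ} (G : SimpleGraph (Fin n)) : Set (SimpleGraph (Fin (n - 1))) :=
  {H | ∃ v : Fin n, H = erase G v}

/-- The shadow `∂𝒢` of a collection of ordered graphs. -/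
def shadowCol {n : ℕ} (𝒢 : Set (SimpleGraph (Fin n))) : Set (SimpleGraph (Fin (n - 1))) :=
  ⋃ G ∈ 𝒢, shadow G

/-- `x ∼ y` : the relation `Γ(x) \ {y} = Γ(y) \ {x}`. -/
def simRel {n : ℕ} (G : SimpleGraph (Fin n)) (x y : Fin n) : Prop :=
  G.neighborSet x \ {y} = G.neighborSet y \ {x}

/-- A set of consecutive vertices whose elements are pairwise `∼`-equivalent. -/
def IsHomInterval {n : ℕ} (G : SimpleGraph (Fin n)) (B : Set (Fin n)) : Prop :=
  B.OrdConnected ∧ ∀ x ∈ B, ∀ y ∈ B, simRel G x y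

/-- A homogeneous block: a maximal nonempty set of consecutive vertices whose elements are
pairwise `∼`-equivalent. -/
def IsHomBlock {n : ℕ} (G : SimpleGraph (Fin n)) (B : Set (Fin n)) : Prop :=
  B.Nonempty ∧ IsHomInterval G B ∧ ∀ C, IsHomInterval G C → B ⊆ C → B = C

open Classical in
/-- The excess `m(G) = Σ_{B : |B| ≥ 3} (|B| − 2)`, the sum over homogeneous blocks;
(truncated ℕ-subtraction makes blocks with `|B| ≤ 2` contribute `0`). -/
noncomputable def excess {n : ℕ} (G : SimpleGraph (Fin n)) : ℕ :=
  ∑ B ∈ Finset.univ.filter (fun B : Finset (Fin n) => IsHomBlock G ↑B), (B.card - 2)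

/-- Two ordered graphs have the same type. -/
def SameType {n n' : ℕ} (G : SimpleGraph (Fin n)) (G' : SimpleGraph (Fin n')) : Prop :=
  ∃ (k : ℕ) (B : Fin k → Set (Fin n)) (B' : Fin k → Set (Fin n')),
    (∀ i, IsHomBlock G (B i)) ∧ (∀ C, IsHomBlock G C → ∃ i, C = B i) ∧
    (∀ i j : Fin k, i < j → ∀ x ∈ B i, ∀ y ∈ B j, x < y) ∧
    (∀ i, IsHomBlock G' (B' i)) ∧ (∀ C, IsHomBlock G' C → ∃ i, C = B' i) ∧
    (∀ i j : Fin k, i < j → ∀ x ∈ B' i, ∀ y ∈ B' j, x < y) ∧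
    (∀ i j : Fin k, (∀ u ∈ B i, ∀ v ∈ B j, u ≠ v → G.Adj u v) ↔
            (∀ u ∈ B' i, ∀ v ∈ B' j, u ≠ v → G'.Adj u v)) ∧
    (∀ i, (B i).ncard = 1 ↔ (B' i).ncard = 1)

/-- The shadow within types `∂_τ G`. -/
def typeShadow {n : ℕ} (G : SimpleGraph (Fin n)) : Set (SimpleGraph (Fin (n - 1))) :=
  {H ∈ shadow G | SameType H G}

/-- The shadow within types `∂_τ 𝒢` of a collection. -/
def typeShadowCol {n : ℕ} (𝒢 : Set (SimpleGraph (Fin n))) : Set (SimpleGraph (Fin (n - 1))) :=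
  ⋃ G ∈ 𝒢, typeShadow G

/-- `Z^d(n) = {x ∈ ℤ^d : x_i ≥ 0, Σ_i x_i = n}`. -/
def Zdn (d n : ℕ) : Set (Fin d → ℤ) := {x | (∀ i, 0 ≤ x i) ∧ ∑ i, x i = (n : ℤ)}

/-- A line in `Z^d(n)`, determined by two coordinates `j, k`. -/
def ZLine (d n : ℕ) (j k : Fin d) : Set (Fin d → ℤ) :=
  {x ∈ Zdn d n | ∀ i, i ≠ j → i ≠ k → x i = 0}

/-- The shadow of a subset `A ⊆ Z^d(n)`. -/
def Zshadow (d n : ℕ) (A : Set (Fin d → ℤ)) : Set (Fin d → ℤ) :=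
  {x ∈ Zdn d (n - 1) | ∃ y ∈ A, ∀ i, x i ≤ y i}

/-- `phiAt G d x` : `x ∈ ℤ^d` is the image `φ(G)` of `G`, i.e. the homogeneous blocks of `G`
of size at least `2`, in increasing order, are `B_1 < ⋯ < B_d` and `x i = |B_i| − 2`. -/
def phiAt {n : ℕ} (G : SimpleGraph (Fin n)) (d : ℕ) (x : Fin d → ℤ) : Prop :=
  ∃ B : Fin d → Set (Fin n),
    (∀ i, IsHomBlock G (B i) ∧ 2 ≤ (B i).ncard) ∧
    (∀ C, IsHomBlock G C → 2 ≤ C.ncard → ∃ i, C = B i) ∧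
    (∀ i j : Fin d, i < j → ∀ u ∈ B i, ∀ v ∈ B j, u < v) ∧
    (∀ i, x i = ((B i).ncard : ℤ) - 2)

/-- `𝒢₀` (a set of ordered graphs of a common type, of common excess `m`) contains a line:
some subset `S ⊆ 𝒢₀` has `φ(S)` equal to a line in `Z^d(m)`. -/
def ContainsLine {n : ℕ} (𝒢₀ : Set (SimpleGraph (Fin n))) (m : ℕ) : Prop :=
  ∃ S ⊆ 𝒢₀, ∃ (d : ℕ) (j k : Fin d),
    {x : Fin d → ℤ | ∃ G ∈ S, phiAt G d x} = ZLine d m j k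

/-- `eraseSet G X` is `G − X`: delete all vertices of `X` and relabel order-preservingly. -/
noncomputable def eraseSet {n : ℕ} (G : SimpleGraph (Fin n)) (X : Finset (Fin n)) :
    SimpleGraph (Fin (n - X.card)) where
  Adj i j := G.Adj ((Xᶜ.orderIsoOfFin (by rw [Finset.card_compl, Fintype.card_fin]) i) : Fin n)
                   ((Xᶜ.orderIsoOfFin (by rw [Finset.card_compl, Fintype.card_fin]) j) : Fin n)
  symm := ⟨fun i j h => G.adj_symm h⟩
  loopless := ⟨fun i h => G.irrefl h⟩

/-- A semi-homogeneous block: a set `B` of consecutive vertices such that all vertices of `B`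
have the same neighbourhood outside `B`, and, for some `L ⊆ ℕ`, two vertices `x, y ∈ B` are
adjacent iff `|x − y| ∈ L`. -/
def IsSemiHomBlock {n : ℕ} (G : SimpleGraph (Fin n)) (B : Set (Fin n)) : Prop :=
  B.OrdConnected ∧
  (∀ x ∈ B, ∀ y ∈ B, G.neighborSet x \ B = G.neighborSet y \ B) ∧
  ∃ L : Set ℕ, ∀ x ∈ B, ∀ y ∈ B, (G.Adj x y ↔ ((x : ℤ) - (y : ℤ)).natAbs ∈ L)


section Aux

variable {n : ℕ} {G : SimpleGraph (Fin n)}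

lemma delMap_val {n : ℕ} (v : Fin n) (i : Fin (n - 1)) :
    ((delMap v i : Fin n) : ℕ) = if (i : ℕ) < (v : ℕ) then (i : ℕ) else (i : ℕ) + 1 := by
  unfold delMap; split_ifs <;> rfl

lemma delMap_strictMono {n : ℕ} (v : Fin n) : StrictMono (delMap v) := by
  intro i j hij
  have hi := delMap_val v i
  have hj := delMap_val v j
  rw [Fin.lt_def] at hij ⊢
  split_ifs at hi hj <;> omega

lemma delMap_injective {n : ℕ} (v : Fin n) : Function.Injective (delMap v) :=
  (delMap_strictMono v).injective

lemma delMap_ne {n : ℕ} (v : Fin n) (i : Fin (n - 1)) : delMap v i ≠ v := by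
  intro h
  have := congrArg (Fin.val) h
  have hi := delMap_val v i
  split_ifs at hi <;> omega

lemma simRel_iff {x y : Fin n} :
    simRel G x y ↔ ∀ z, (G.Adj x z ∧ z ≠ y) ↔ (G.Adj y z ∧ z ≠ x) := by
  unfold simRel
  rw [Set.ext_iff]
  apply forall_congr'
  intro z
  simp [SimpleGraph.mem_neighborSet, Set.mem_diff]

lemma simRel_refl (x : Fin n) : simRel G x x := rfl

lemma simRel_symm {x y : Fin n} (h : simRel G x y) : simRel G y x := h.symm

private lemma simRel_trans_aux {x p y : Fin n} (hxy : x ≠ y) (hxp : x ≠ p) (hpy : p ≠ y)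
    (h1 : ∀ z, (G.Adj x z ∧ z ≠ p) ↔ (G.Adj p z ∧ z ≠ x))
    (h2 : ∀ z, (G.Adj p z ∧ z ≠ y) ↔ (G.Adj y z ∧ z ≠ p)) :
    ∀ z, (G.Adj x z ∧ z ≠ y) → (G.Adj y z ∧ z ≠ x) := by
  rintro z ⟨hz, hzy⟩
  have hzx : z ≠ x := fun h => G.loopless.irrefl x (h ▸ hz)
  by_cases hzp : z = p
  · rw [hzp] at hz ⊢
    -- z = p : G.Adj x p; want G.Adj y p
    have hpx : G.Adj p x := G.adj_symm hz
    have h2x := (h2 x).mp ⟨hpx, hxy⟩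
    have hxyadj : G.Adj x y := G.adj_symm h2x.1
    have h1y := (h1 y).mp ⟨hxyadj, hpy.symm⟩
    exact ⟨G.adj_symm h1y.1, hxp.symm⟩
  · have h1z := (h1 z).mp ⟨hz, hzp⟩
    have h2z := (h2 z).mp ⟨h1z.1, hzy⟩
    exact ⟨h2z.1, hzx⟩

lemma simRel_trans {x p y : Fin n} (h1 : simRel G x p) (h2 : simRel G p y) :
    simRel G x y := by
  by_cases hxy : x = y; · subst hxy; exact simRel_refl x
  by_cases hxp : x = p; · subst hxp; exact h2
  by_cases hpy : p = y; · subst hpy; exact h1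
  rw [simRel_iff] at h1 h2 ⊢
  intro z
  constructor
  · exact simRel_trans_aux hxy hxp hpy h1 h2 z
  · refine simRel_trans_aux (Ne.symm hxy) (Ne.symm hpy) (Ne.symm hxp) ?_ ?_ z
    · intro w; exact (h2 w).symm
    · intro w; exact (h1 w).symm

lemma isHomInterval_union {C D : Set (Fin n)} (hC : IsHomInterval G C)
    (hD : IsHomInterval G D) (p : Fin n) (hpC : p ∈ C) (hpD : p ∈ D) :
    IsHomInterval G (C ∪ D) := by
  constructor
  · constructor
    intro x hx y hy z hz
    rcases hx with hx | hx <;> rcases hy with hy | hy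
    · exact Or.inl (hC.1.out hx hy hz)
    · rcases le_or_gt z p with hzp | hpz
      · exact Or.inl (hC.1.out hx hpC ⟨hz.1, hzp⟩)
      · exact Or.inr (hD.1.out hpD hy ⟨le_of_lt hpz, hz.2⟩)
    · rcases le_or_gt z p with hzp | hpz
      · exact Or.inr (hD.1.out hx hpD ⟨hz.1, hzp⟩)
      · exact Or.inl (hC.1.out hpC hy ⟨le_of_lt hpz, hz.2⟩)
    · exact Or.inr (hD.1.out hx hy hz)
  · intro x hx y hy
    rcases hx with hx | hx <;> rcases hy with hy | hy
    · exact hC.2 x hx y hy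
    · exact simRel_trans (hC.2 x hx p hpC) (hD.2 p hpD y hy)
    · exact simRel_trans (hD.2 x hx p hpD) (hC.2 p hpC y hy)
    · exact hD.2 x hx y hy

lemma exists_block_containing (G : SimpleGraph (Fin n)) (x : Fin n) :
    ∃ B, IsHomBlock G B ∧ x ∈ B := by
  have hfin : {C : Set (Fin n) | IsHomInterval G C ∧ x ∈ C}.Finite := Set.toFinite _
  have hne : {C : Set (Fin n) | IsHomInterval G C ∧ x ∈ C}.Nonempty := by
    refine ⟨{x}, ⟨⟨?_, ?_⟩, rfl⟩⟩
    · exact Set.ordConnected_singleton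
    · intro a ha b hb
      rw [Set.mem_singleton_iff] at ha hb
      rw [ha, hb]
      exact simRel_refl x
  obtain ⟨M, hM, hMmax⟩ := Set.Finite.exists_maximalFor id _ hfin hne
  refine ⟨M, ⟨⟨x, hM.2⟩, hM.1, ?_⟩, hM.2⟩
  intro C hC hMC
  exact le_antisymm hMC (hMmax ⟨hC, hMC hM.2⟩ hMC)

lemma block_subset {B C : Set (Fin n)} (hB : IsHomBlock G B) (hC : IsHomInterval G C)
    (p : Fin n) (hpB : p ∈ B) (hpC : p ∈ C) : C ⊆ B := by
  have h := hB.2.2 (B ∪ C) (isHomInterval_union hB.2.1 hC p hpB hpC) Set.subset_union_left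
  rw [h]
  exact Set.subset_union_right

lemma simRel_erase {v : Fin n} {i j : Fin (n - 1)}
    (h : simRel G (delMap v i) (delMap v j)) : simRel (erase G v) i j := by
  rw [simRel_iff] at h ⊢
  intro z
  have hz := h (delMap v z)
  have hij : delMap v z ≠ delMap v j ↔ z ≠ j := (delMap_injective v).ne_iff
  have hii : delMap v z ≠ delMap v i ↔ z ≠ i := (delMap_injective v).ne_iff
  have hadj1 : (erase G v).Adj i z ↔ G.Adj (delMap v i) (delMap v z) := Iff.rfl
  have hadj2 : (erase G v).Adj j z ↔ G.Adj (delMap v j) (delMap v z) := Iff.rfl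
  rw [hadj1, hadj2]
  constructor
  · rintro ⟨h1, h2⟩
    have := hz.mp ⟨h1, hij.mpr h2⟩
    exact ⟨this.1, hii.mp this.2⟩
  · rintro ⟨h1, h2⟩
    have := hz.mpr ⟨h1, hii.mpr h2⟩
    exact ⟨this.1, hij.mp this.2⟩

lemma trace_homInterval (v : Fin n) {C : Set (Fin n)} (hC : IsHomInterval G C) :
    IsHomInterval (erase G v) {i : Fin (n - 1) | delMap v i ∈ C} := by
  constructor
  · constructor
    intro x hx y hy z hz
    exact hC.1.out hx hy ⟨(delMap_strictMono v).monotone hz.1,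
      (delMap_strictMono v).monotone hz.2⟩
  · intro x hx y hy
    exact simRel_erase (hC.2 _ hx _ hy)

end Aux

/-- **Observation (type changes).** If `B` is a homogeneous block of `G` of size at most `2`
and `v ∈ B`, then `G − v` does not have the same type as `G`. -/
theorem type_changes (n : ℕ) (G : SimpleGraph (Fin n)) (B : Set (Fin n))
    (hB : IsHomBlock G B) (hBcard : B.ncard ≤ 2) (v : Fin n) (hv : v ∈ B) :
    ¬ SameType (erase G v) G := by
  rintro ⟨k, A, A', hA, hAall, hAord, hA', hA'all, hA'ord, hadj, hcard⟩
  -- index uniqueness for both enumerations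
  have hAuniq : ∀ (j j' : Fin k) (x : Fin (n - 1)), x ∈ A j → x ∈ A j' → j = j' := by
    intro j j' x hx hx'
    by_contra hne
    rcases lt_or_gt_of_ne hne with h | h
    · exact lt_irrefl x (hAord j j' h x hx x hx')
    · exact lt_irrefl x (hAord j' j h x hx' x hx)
  -- B is one of the A' blocks
  obtain ⟨i0, hi0⟩ := hA'all B hB
  -- pick an element of each A-block
  choose pick hpick using fun i => (hA i).1
  -- each vertex of [n] lies in some A'-block
  have hcover : ∀ y : Fin (n - 1), ∃ i : Fin k, delMap v y ∈ A' i := by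
    intro y
    obtain ⟨C, hC, hyC⟩ := exists_block_containing G (delMap v y)
    obtain ⟨i, hCi⟩ := hA'all C hC
    exact ⟨i, hCi ▸ hyC⟩
  choose gg hgg using hcover
  set g : Fin k → Fin k := fun i => gg (pick i) with hg
  -- trace lemma : the trace of the A'-block containing (the image of) y lies in y's A-block
  have htr : ∀ (y : Fin (n - 1)) (j : Fin k), y ∈ A j →
      ∀ z : Fin (n - 1), delMap v z ∈ A' (gg y) → z ∈ A j := by
    intro y j hyj z hz
    exact block_subset (hA j) (trace_homInterval v (hA' (gg y)).2.1) y hyj (hgg y) hz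
  -- g is injective
  have hginj : Function.Injective g := by
    intro i j hij
    have h1 : pick j ∈ A i := by
      refine htr (pick i) i (hpick i) (pick j) ?_
      have := hgg (pick j)
      rwa [show gg (pick i) = gg (pick j) from hij]
    exact (hAuniq i j (pick j) h1 (hpick j)).symm ▸ rfl
  -- g is strictly monotone
  have hgmono : StrictMono g := by
    intro i j hij
    have hne : g i ≠ g j := fun h => absurd (hginj h) (ne_of_lt hij)
    rcases lt_or_gt_of_ne hne with h | h
    · exact h
    · exfalso
      have h1 : delMap v (pick j) < delMap v (pick i) :=
        hA'ord (g j) (g i) h _ (hgg (pick j)) _ (hgg (pick i))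
      have h2 : pick i < pick j := hAord i j hij _ (hpick i) _ (hpick j)
      exact absurd (delMap_strictMono v h2) (not_lt_of_gt h1)
  -- g is surjective, hence g = id
  have hgsurj : Function.Surjective g := Finite.surjective_of_injective hginj
  have hgid : g = id := by
    have hr : Set.range g = Set.range (id : Fin k → Fin k) := by
      rw [Set.range_id]
      exact Set.range_eq_univ.mpr hgsurj
    haveI : WellFoundedLT (Fin k) := inferInstance
    exact (StrictMono.range_inj hgmono strictMono_id).mp hr
  have hgid' : ∀ i, gg (pick i) = i := fun i => congrFun hgid i
  -- key: delMap v (pick i0) ∈ B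
  have hkey : delMap v (pick i0) ∈ B := by
    have h := hgg (pick i0)
    rw [hgid' i0] at h
    rw [hi0]
    exact h
  -- B has ncard 1 or 2
  have hBfin : B.Finite := Set.toFinite B
  have hBpos : 0 < B.ncard := (Set.ncard_pos hBfin).mpr ⟨v, hv⟩
  interval_cases h : B.ncard
  · -- ncard B = 1 : B = {v}
    obtain ⟨a, ha⟩ := Set.ncard_eq_one.mp h
    rw [ha] at hv hkey
    rw [Set.mem_singleton_iff] at hv hkey
    exact delMap_ne v (pick i0) (hkey.trans hv.symm)
  · -- ncard B = 2
    obtain ⟨a, b, hab, hB2⟩ := Set.ncard_eq_two.mp h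
    -- B \ {v} is a singleton; name its element w and note delMap v (pick i0) = w
    have hmemw : ∀ y : Fin (n - 1), delMap v y ∈ B → y = pick i0 → True := fun _ _ _ => trivial
    have hsingle : ∀ y z : Fin (n - 1), delMap v y ∈ B → delMap v z ∈ B → y = z := by
      intro y z hy hz
      rw [hB2, Set.mem_insert_iff, Set.mem_singleton_iff] at hy hz
      rw [hB2, Set.mem_insert_iff, Set.mem_singleton_iff] at hv
      apply delMap_injective v
      have hyne := delMap_ne v y
      have hzne := delMap_ne v z
      rcases hv with rfl | rfl
      · rcases hy with hy | hy
        · exact absurd hy hyne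
        · rcases hz with hz | hz
          · exact absurd hz hzne
          · rw [hy, hz]
      · rcases hy with hy | hy
        · rcases hz with hz | hz
          · rw [hy, hz]
          · exact absurd hz hzne
        · exact absurd hy hyne
    -- A i0 = {pick i0}
    have hsub : A i0 ⊆ {pick i0} := by
      intro y hy
      have hy' : delMap v y ∈ A' (gg y) := hgg y
      -- show gg y = i0
      have hyi0 : gg y = i0 := by
        have h1 : pick (gg y) ∈ A i0 := by
          refine htr y i0 hy (pick (gg y)) ?_
          have := hgg (pick (gg y))
          rwa [hgid' (gg y)] at this
        exact hAuniq (gg y) i0 (pick (gg y)) (hpick (gg y)) h1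
      rw [hyi0, ← hi0] at hy'
      have := hsingle y (pick i0) hy' hkey
      exact this
    have hAi0 : A i0 = {pick i0} :=
      Set.eq_singleton_iff_unique_mem.mpr ⟨hpick i0, fun x hx => hsub hx⟩
    have h1 : (A i0).ncard = 1 := by rw [hAi0]; exact Set.ncard_singleton _
    have h2 := (hcard i0).mp h1
    rw [← hi0] at h2
    omega

end OrderedGraphs
end

section
/- Let G and H be ordered graphs on [n], and let a, b ∈ [n] with a ≤ b. If G − a = H − b, then every edge in the symmetric difference E(G) △ E(H) has at least one endpoint in the interval [a,b] = {w : a ≤ w ≤ b}. -/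
namespace OrderedGraphs

/-- **Observation.** If `a ≤ b` and `G − a = H − b`, then every edge of the symmetric
difference `E(G) △ E(H)` has an endpoint in `[a, b]`. -/
theorem symmDiff_endpoint (n : ℕ) (G H : SimpleGraph (Fin n)) (a b : Fin n) (hab : a ≤ b)
    (h : erase G a = erase H b) :
    ∀ i j : Fin n, ¬ (G.Adj i j ↔ H.Adj i j) → i ∈ Set.Icc a b ∨ j ∈ Set.Icc a b := by
  intro i j hne
  by_contra hcon
  push_neg at hcon
  obtain ⟨hi, hj⟩ := hcon
  simp only [Set.mem_Icc, not_and_or, not_le] at hi hj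
  have key : ∀ w : Fin n, (w < a ∨ b < w) →
      ∃ k : Fin (n - 1), delMap a k = w ∧ delMap b k = w := by
    intro w hw
    rcases hw with hw | hw
    · have hwa : (w : ℕ) < a := hw
      have hab' : (a : ℕ) ≤ b := hab
      refine ⟨⟨w, by have := a.isLt; omega⟩, ?_, ?_⟩
      · simp only [delMap]
        rw [dif_pos hwa]
      · simp only [delMap]
        rw [dif_pos (by simpa using lt_of_lt_of_le hwa hab')]
    · have hwb : (b : ℕ) < w := hw
      have hw1 : (w : ℕ) - 1 < n - 1 := by have := w.isLt; omega
      refine ⟨⟨(w : ℕ) - 1, hw1⟩, ?_, ?_⟩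
      · simp only [delMap]
        rw [dif_neg (by have hab' : (a : ℕ) ≤ b := hab; simp; omega)]
        exact Fin.ext (by simp; omega)
      · simp only [delMap]
        rw [dif_neg (by simp; omega)]
        exact Fin.ext (by simp; omega)
  obtain ⟨ki, hki1, hki2⟩ := key i hi
  obtain ⟨kj, hkj1, hkj2⟩ := key j hj
  apply hne
  have hG : G.Adj i j ↔ (erase G a).Adj ki kj := by
    simp [erase, hki1, hkj1]
  have hH : H.Adj i j ↔ (erase H b).Adj ki kj := by
    simp [erase, hki2, hkj2]
  rw [hG, hH, h]

end OrderedGraphs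
end

section
/- Let G and H be ordered graphs on [n], and let 1 ≤ a_1 ≤ b_1 < a_2 ≤ b_2 < a_3 ≤ b_3 ≤ n. If G − a_i = H − b_i for each i ∈ {1,2,3}, then G = H. -/
namespace OrderedGraphs

lemma delMap_eq {n : ℕ} (c : Fin n) (k : ℕ) (hk : k < n - 1) (w : Fin n)
    (hcase : ((w : ℕ) < c ∧ k = w) ∨ ((c : ℕ) < w ∧ k + 1 = w)) :
    delMap c ⟨k, hk⟩ = w := by
  unfold delMap
  split_ifs with h <;> simp only [Fin.val_mk] at h <;> apply Fin.ext <;> simp only [Fin.val_mk] <;> omega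

lemma key {n : ℕ} {G H : SimpleGraph (Fin n)} {a b : Fin n} (hab : a ≤ b)
    (e : erase G a = erase H b) {u v : Fin n}
    (hu : (u : ℕ) < a ∨ (b : ℕ) < u) (hv : (v : ℕ) < a ∨ (b : ℕ) < v) :
    G.Adj u v ↔ H.Adj u v := by
  have hab' : (a : ℕ) ≤ b := hab
  have hbn := b.isLt
  have hun := u.isLt
  have hvn := v.isLt
  set ku : ℕ := if (u : ℕ) < a then (u : ℕ) else (u : ℕ) - 1 with hku
  set kv : ℕ := if (v : ℕ) < a then (v : ℕ) else (v : ℕ) - 1 with hkv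
  have hku' : ku < n - 1 := by simp only [hku]; split_ifs <;> omega
  have hkv' : kv < n - 1 := by simp only [hkv]; split_ifs <;> omega
  have hua : delMap a ⟨ku, hku'⟩ = u := by
    apply delMap_eq; simp only [hku]; split_ifs <;> omega
  have hub : delMap b ⟨ku, hku'⟩ = u := by
    apply delMap_eq; simp only [hku]; split_ifs <;> omega
  have hva : delMap a ⟨kv, hkv'⟩ = v := by
    apply delMap_eq; simp only [hkv]; split_ifs <;> omega
  have hvb : delMap b ⟨kv, hkv'⟩ = v := by
    apply delMap_eq; simp only [hkv]; split_ifs <;> omega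
  have he : (erase G a).Adj ⟨ku, hku'⟩ ⟨kv, hkv'⟩ ↔ (erase H b).Adj ⟨ku, hku'⟩ ⟨kv, hkv'⟩ := by
    rw [e]
  simpa [erase, hua, hub, hva, hvb] using he

/-- **Lemma (three disjoint intervals).** If `a₁ ≤ b₁ < a₂ ≤ b₂ < a₃ ≤ b₃` and
`G − aᵢ = H − bᵢ` for `i = 1, 2, 3`, then `G = H`. -/
theorem three_disjoint (n : ℕ) (G H : SimpleGraph (Fin n)) (a₁ b₁ a₂ b₂ a₃ b₃ : Fin n)
    (h₁ : a₁ ≤ b₁) (h₂ : b₁ < a₂) (h₃ : a₂ ≤ b₂) (h₄ : b₂ < a₃) (h₅ : a₃ ≤ b₃)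
    (e₁ : erase G a₁ = erase H b₁) (e₂ : erase G a₂ = erase H b₂)
    (e₃ : erase G a₃ = erase H b₃) :
    G = H := by
  have h₁' : (a₁ : ℕ) ≤ b₁ := h₁
  have h₂' : (b₁ : ℕ) < a₂ := h₂
  have h₃' : (a₂ : ℕ) ≤ b₂ := h₃
  have h₄' : (b₂ : ℕ) < a₃ := h₄
  have h₅' : (a₃ : ℕ) ≤ b₃ := h₅
  ext u v
  by_cases c1 : ((u : ℕ) < a₁ ∨ (b₁ : ℕ) < u) ∧ ((v : ℕ) < a₁ ∨ (b₁ : ℕ) < v)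
  · exact key h₁ e₁ c1.1 c1.2
  by_cases c2 : ((u : ℕ) < a₂ ∨ (b₂ : ℕ) < u) ∧ ((v : ℕ) < a₂ ∨ (b₂ : ℕ) < v)
  · exact key h₃ e₂ c2.1 c2.2
  by_cases c3 : ((u : ℕ) < a₃ ∨ (b₃ : ℕ) < u) ∧ ((v : ℕ) < a₃ ∨ (b₃ : ℕ) < v)
  · exact key h₅ e₃ c3.1 c3.2
  exfalso; omega

end OrderedGraphs
end
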